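/- For flat layouts A and B, the following are equivalent: (1) A ⊥ B; (2) B ⊥ A; (3) A ⊥ squeeze(B); (4) A ⊥ coal(B); (5) A ⊥ sort(B). -/

import Mathlib

/-- A flat layout, represented as its list of modes `(sᵢ, dᵢ)`:
the first component of each mode is a shape entry, the second a stride entry. -/
abbrev FlatLayout := List (ℕ × ℕ)

namespace FlatLayout

/-- Validity of a flat layout: every shape entry is a positive integer. -/
def Valid (L : FlatLayout) : Prop := ∀ p ∈ L, 0 < p.1

/-- The size of a flat layout: the product of its shape entries. -/
def size (L : FlatLayout) : ℕ := (L.map Prod.fst).prod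

/-- The cosize of a flat layout: `1 + Σ (sᵢ - 1) * dᵢ`. -/
def cosize (L : FlatLayout) : ℕ := 1 + (L.map fun p => (p.1 - 1) * p.2).sum

/-- The rank of a flat layout: its number of modes. -/
def rank (L : FlatLayout) : ℕ := L.length

/-- The layout function `Φ_L`: `Φ_L(x) = Σ xᵢ·dᵢ` where
`xᵢ = ⌊x / (s₁⋯sᵢ₋₁)⌋ mod sᵢ`. -/
def phi : FlatLayout → ℕ → ℕ
  | [], _ => 0
  | (s, d) :: rest, x => x % s * d + phi rest (x / s)

/-- `squeeze L` deletes every mode whose shape entry equals `1`. -/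
def squeeze (L : FlatLayout) : FlatLayout := L.filter fun p => p.1 != 1

/-- `filterZeros L` deletes every mode whose stride entry equals `0`. -/
def filterZeros (L : FlatLayout) : FlatLayout := L.filter fun p => p.2 != 0

/-- The ordering on modes: `(s,d) ⪯ (s',d')` iff `d < d'`, or `d = d'` and `s ≤ s'`. -/
def ModeLE (p q : ℕ × ℕ) : Prop := p.2 < q.2 ∨ (p.2 = q.2 ∧ p.1 ≤ q.1)

instance : DecidableRel ModeLE := fun p q => by unfold ModeLE; infer_instance

/-- A flat layout is sorted if its consecutive modes are `⪯`-increasing. -/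
def Sorted (L : FlatLayout) : Prop := L.Chain' ModeLE

/-- `sortL L` stably sorts the modes of `L` with respect to `⪯`. -/
def sortL (L : FlatLayout) : FlatLayout := L.mergeSort fun p q => decide (ModeLE p q)

/-- A flat layout is coalesced if no shape entry equals `1` and
for consecutive modes, `sᵢ·dᵢ ≠ dᵢ₊₁`. -/
def Coalesced (L : FlatLayout) : Prop :=
  (∀ p ∈ L, p.1 ≠ 1) ∧ L.Chain' fun p q => p.1 * p.2 ≠ q.2

/-- Combine adjacent modes `(s,d), (s',d')` with `d' = s·d` into `(s·s', d)`, repeatedly. -/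
def coalAux : List (ℕ × ℕ) → List (ℕ × ℕ)
  | [] => []
  | p :: rest =>
    match coalAux rest with
    | [] => [p]
    | q :: rest' =>
        if p.1 * p.2 = q.2 then (p.1 * q.1, p.2) :: rest' else p :: q :: rest'

/-- Coalesce of a flat layout: squeeze, then repeatedly combine adjacent modes
`(s,d), (s',d')` with `d' = s·d` into `(s·s', d)`. -/
def coal (L : FlatLayout) : FlatLayout := coalAux (squeeze L)

/-- Compactness: the layout function takes values in `{0, …, cosize L - 1}` and induces a
bijection `{0, …, size L - 1} → {0, …, cosize L - 1}`. -/
def Compact (L : FlatLayout) : Prop :=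
  Set.BijOn (phi L) {x | x < size L} {y | y < cosize L}

/-- `B` is a complement of `A` (written `A ⊥ B`) if the concatenation `A ⋆ B` is compact. -/
def Perp (A B : FlatLayout) : Prop := Compact (A ++ B)

/-- `A` is complementable if, writing `sort(squeeze A) = (s₁,…,sₘ):(d₁,…,dₘ)`,
`sᵢ·dᵢ` divides `dᵢ₊₁` for all `1 ≤ i < m`. -/
def Complementable (A : FlatLayout) : Prop :=
  (sortL (squeeze A)).Chain' fun p q => p.1 * p.2 ∣ q.2

/-- `B` is an `N`-complement of `A` if `B` is a complement of `A`
and `size A * size B = N`. -/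
def IsNComplement (A B : FlatLayout) (N : ℕ) : Prop :=
  Perp A B ∧ size A * size B = N

/-- `A` is `N`-complementable if, writing `sort(squeeze A) = (s₁,…,sₘ):(d₁,…,dₘ)`,
`sᵢ·dᵢ ∣ dᵢ₊₁` for all `1 ≤ i < m`, and `sₘ·dₘ ∣ N`. -/
def NComplementable (A : FlatLayout) (N : ℕ) : Prop :=
  ((sortL (squeeze A)).Chain' fun p q => p.1 * p.2 ∣ q.2) ∧
  ∀ p, (sortL (squeeze A)).getLast? = some p → p.1 * p.2 ∣ N

/-- Given `l = [(s₁,d₁),…,(sₘ,dₘ)]`, the layout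
`C = (d₁, d₂/(s₁d₁), …, dₘ/(sₘ₋₁dₘ₋₁)) : (1, s₁d₁, …, sₘ₋₁dₘ₋₁)`. -/
def compModes (l : List (ℕ × ℕ)) : List (ℕ × ℕ) :=
  match l with
  | [] => []
  | (_, d₁) :: t =>
      (d₁, 1) :: (l.zip t).map fun pq => (pq.2.2 / (pq.1.1 * pq.1.2), pq.1.1 * pq.1.2)

/-- The complement `comp A = coal C` of a complementable flat layout `A`. -/
def comp (A : FlatLayout) : FlatLayout := coal (compModes (sortL (squeeze A)))

/-- Given `l = [(s₁,d₁),…,(sₘ,dₘ)]` and `N`, the layout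
`C = (d₁, d₂/(s₁d₁), …, dₘ/(sₘ₋₁dₘ₋₁), N/(sₘdₘ)) : (1, s₁d₁, …, sₘ₋₁dₘ₋₁, sₘdₘ)`. -/
def compNModes (l : List (ℕ × ℕ)) (N : ℕ) : List (ℕ × ℕ) :=
  match l.getLast? with
  | none => [(N, 1)]
  | some (sm, dm) => compModes l ++ [(N / (sm * dm), sm * dm)]

/-- The `N`-complement `comp(A, N) = coal C` of an `N`-complementable flat layout `A`. -/
def compN (A : FlatLayout) (N : ℕ) : FlatLayout :=
  coal (compNModes (sortL (squeeze A)) N)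

/-- `L` is tractable if, writing `sort L = (s₁,…,sₘ):(d₁,…,dₘ)`, for every `1 ≤ i < m`
either `dᵢ = 0` or `sᵢ·dᵢ` divides `dᵢ₊₁`. -/
def Tractable (L : FlatLayout) : Prop :=
  (sortL L).Chain' fun p q => p.2 = 0 ∨ p.1 * p.2 ∣ q.2

end FlatLayout

namespace FlatLayout

-- basic lemmas
lemma size_nil : size ([] : FlatLayout) = 1 := rfl
lemma size_cons (p : ℕ × ℕ) (t : FlatLayout) : size (p :: t) = p.1 * size t := rfl
lemma cosize_cons (p : ℕ × ℕ) (t : FlatLayout) :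
    cosize (p :: t) = (p.1 - 1) * p.2 + cosize t := by simp [cosize]; ring
lemma phi_nil (x : ℕ) : phi [] x = 0 := rfl
lemma phi_cons (p : ℕ × ℕ) (t : FlatLayout) (x : ℕ) :
    phi (p :: t) x = x % p.1 * p.2 + phi t (x / p.1) := by obtain ⟨s, d⟩ := p; rfl

lemma size_append (X Y : FlatLayout) : size (X ++ Y) = size X * size Y := by
  simp [size]
lemma cosize_append (X Y : FlatLayout) : cosize (X ++ Y) + 1 = cosize X + cosize Y := by
  simp [cosize]; ring
lemma phi_append (X Y : FlatLayout) (x : ℕ) :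
    phi (X ++ Y) x = phi X x + phi Y (x / size X) := by
  induction X generalizing x with
  | nil => simp [phi_nil, size_nil]
  | cons p t ih =>
      simp only [List.cons_append, phi_cons, ih, size_cons, add_assoc,
        Nat.div_div_eq_div_mul]

lemma compact_congr {L L' : FlatLayout} (hs : size L = size L') (hc : cosize L = cosize L')
    (hp : ∀ x, phi L x = phi L' x) : Compact L ↔ Compact L' := by
  unfold Compact
  rw [funext hp, hs, hc]



lemma size_squeeze (L : FlatLayout) : size (squeeze L) = size L := by
  induction L with
  | nil => rfl
  | cons p t ih =>
      by_cases h : p.1 = 1 <;>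
        simp [squeeze, List.filter_cons, h, size_cons, ih] <;> simp [squeeze] at ih <;> omega

lemma cosize_squeeze (L : FlatLayout) : cosize (squeeze L) = cosize L := by
  induction L with
  | nil => rfl
  | cons p t ih =>
      by_cases h : p.1 = 1 <;>
        simp [squeeze, List.filter_cons, h, cosize_cons, ih] <;> simp [squeeze] at ih <;> omega

lemma phi_squeeze (L : FlatLayout) (x : ℕ) : phi (squeeze L) x = phi L x := by
  induction L generalizing x with
  | nil => rfl
  | cons p t ih =>
      by_cases h : p.1 = 1
      · simp [squeeze, List.filter_cons, h, phi_cons, Nat.mod_one, Nat.div_one]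
        simpa [squeeze] using ih x
      · simp [squeeze, List.filter_cons, h, phi_cons]
        simpa [squeeze] using ih (x / p.1)

lemma valid_squeeze {L : FlatLayout} (h : Valid L) : Valid (squeeze L) :=
  fun p hp => h p (List.mem_of_mem_filter hp)

lemma valid_coalAux {L : FlatLayout} (h : Valid L) : Valid (coalAux L) := by
  induction L with
  | nil => exact h
  | cons p t ih =>
      have ht : Valid t := fun q hq => h q (List.mem_cons_of_mem _ hq)
      have hp : 0 < p.1 := h p (List.mem_cons_self)
      have ihv := ih ht
      rcases hq : coalAux t with _ | ⟨q, rest⟩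
      · intro r hr
        simp only [coalAux, hq] at hr
        simp at hr; subst hr; exact hp
      · have hq1 : 0 < q.1 := ihv q (hq ▸ List.mem_cons_self)
        intro r hr
        simp only [coalAux, hq] at hr
        by_cases hc : p.1 * p.2 = q.2
        · rw [if_pos hc] at hr
          rcases List.mem_cons.1 hr with hr | hr
          · subst hr; exact Nat.mul_pos hp hq1
          · exact ihv r (hq ▸ List.mem_cons_of_mem _ hr)
        · rw [if_neg hc] at hr
          rcases List.mem_cons.1 hr with hr | hr
          · subst hr; exact hp
          · exact ihv r (hq ▸ hr)

lemma coalAux_spec {L : FlatLayout} (hL : Valid L) :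
    size (coalAux L) = size L ∧ cosize (coalAux L) = cosize L ∧
      ∀ x, phi (coalAux L) x = phi L x := by
  induction L with
  | nil => exact ⟨rfl, rfl, fun _ => rfl⟩
  | cons p t ih =>
      have ht : Valid t := fun q hq => hL q (List.mem_cons_of_mem _ hq)
      have hp : 0 < p.1 := hL p (List.mem_cons_self)
      obtain ⟨ihs, ihc, ihp⟩ := ih ht
      have ihv := valid_coalAux ht
      rcases hq : coalAux t with _ | ⟨q, rest⟩
      · rw [hq] at ihs ihc ihp
        have hred : coalAux (p :: t) = [p] := by simp only [coalAux, hq]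
        refine ⟨?_, ?_, fun x => ?_⟩
        · rw [hred, size_cons, size_cons, ← ihs]
        · rw [hred, cosize_cons, cosize_cons, ← ihc]
        · rw [hred, phi_cons, phi_cons, ← ihp]
      · have hq1 : 0 < q.1 := ihv q (hq ▸ List.mem_cons_self)
        rw [hq] at ihs ihc ihp
        by_cases hc : p.1 * p.2 = q.2
        · have hred : coalAux (p :: t) = (p.1 * q.1, p.2) :: rest := by
            simp only [coalAux, hq]; rw [if_pos hc]
          refine ⟨?_, ?_, fun x => ?_⟩
          · rw [hred, size_cons, size_cons, ← ihs, size_cons]; ring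
          · rw [hred, cosize_cons, cosize_cons, ← ihc, cosize_cons, ← hc]
            obtain ⟨a, ha⟩ : ∃ a, p.1 = a + 1 := ⟨p.1 - 1, by omega⟩
            obtain ⟨b, hb⟩ : ∃ b, q.1 = b + 1 := ⟨q.1 - 1, by omega⟩
            have e1 : (a + 1) * (b + 1) - 1 = a + b + a * b := by
              have : (a + 1) * (b + 1) = a + b + a * b + 1 := by ring
              omega
            have e2 : a + 1 - 1 = a := by omega
            have e3 : b + 1 - 1 = b := by omega
            simp only [ha, hb]
            rw [e1, e2, e3]; ring
          · rw [hred, phi_cons, phi_cons, ← ihp, phi_cons, ← hc]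
            simp only []
            rw [Nat.mod_mul, ← Nat.div_div_eq_div_mul]
            ring
        · have hred : coalAux (p :: t) = p :: q :: rest := by
            simp only [coalAux, hq]; rw [if_neg hc]
          refine ⟨?_, ?_, fun x => ?_⟩
          · rw [hred, size_cons, ihs, size_cons]
          · rw [hred, cosize_cons, ihc, cosize_cons]
          · rw [hred, phi_cons, ihp, phi_cons]

/-- Swap map on indices for transposing two adjacent modes. -/
def sw (a b x : ℕ) : ℕ := x / b % a + a * (x % b) + a * b * (x / (b * a))

lemma sw_eq (a b x : ℕ) : sw a b x = x / b % a + a * (x % b + b * (x / (b * a))) := by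
  unfold sw; ring

lemma sw_mod {a : ℕ} (ha : 0 < a) (b x : ℕ) : sw a b x % a = x / b % a := by
  rw [sw_eq, Nat.add_mul_mod_self_left, Nat.mod_mod_of_dvd _ dvd_rfl]

lemma sw_div {a : ℕ} (ha : 0 < a) (b x : ℕ) : sw a b x / a = x % b + b * (x / (b * a)) := by
  rw [sw_eq, Nat.add_mul_div_left _ _ ha, Nat.div_eq_of_lt (Nat.mod_lt _ ha), zero_add]

lemma sw_sw {a b : ℕ} (ha : 0 < a) (hb : 0 < b) (x : ℕ) : sw b a (sw a b x) = x := by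
  have h1 : sw a b x / a % b = x % b := by
    rw [sw_div ha b x, Nat.add_mul_mod_self_left, Nat.mod_mod_of_dvd _ dvd_rfl]
  have h2 : sw a b x % a = x / b % a := sw_mod ha b x
  have h3 : sw a b x / (a * b) = x / (b * a) := by
    rw [← Nat.div_div_eq_div_mul, sw_div ha b x, Nat.add_mul_div_left _ _ hb,
      Nat.div_eq_of_lt (Nat.mod_lt _ hb), zero_add]
  show sw a b x / a % b + b * (sw a b x % a) + b * a * (sw a b x / (a * b)) = x
  rw [h1, h2, h3]
  have h4 : x = x % b + b * (x / b) := (Nat.mod_add_div _ _).symm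
  have h5 : x / b = x / b % a + a * (x / b / a) := (Nat.mod_add_div _ _).symm
  rw [Nat.div_div_eq_div_mul] at h5
  calc x % b + b * (x / b % a) + b * a * (x / (b * a))
      = x % b + b * (x / b % a + a * (x / (b * a))) := by ring
    _ = x % b + b * (x / b) := by rw [← h5]
    _ = x := by rw [← h4]

lemma triple_lt {a b n c d e : ℕ} (hc : c < a) (hd : d < b) (he : e < n) :
    c + a * d + a * b * e < a * b * n := by
  have h1 : c + a * d + a * b * e < a * (d + 1) + a * b * e := by
    have : a * (d + 1) = a * d + a := by ring
    omega
  have h2 : a * (d + 1) ≤ a * b := Nat.mul_le_mul_left _ hd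
  have h3 : a * b + a * b * e ≤ a * b * n := by
    have : a * b + a * b * e = a * b * (e + 1) := by ring
    rw [this]
    exact Nat.mul_le_mul_left _ he
  omega

lemma pair_lt {a n c e : ℕ} (hc : c < a) (he : e < n) : c + a * e < a * n := by
  have h1 : c + a * e < a * (e + 1) := by
    have : a * (e + 1) = a * e + a := by ring
    omega
  have h2 : a * (e + 1) ≤ a * n := Nat.mul_le_mul_left _ he
  omega

lemma phi_swap {a b : ℕ} (ha : 0 < a) (hb : 0 < b) (da db : ℕ) (l : FlatLayout) (x : ℕ) :
    phi ((b, db) :: (a, da) :: l) (sw b a x) = phi ((a, da) :: (b, db) :: l) x := by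
  have h1 : sw b a x % b = x / a % b := sw_mod hb a x
  have h2 : sw b a x / b = x % a + a * (x / (a * b)) := sw_div hb a x
  have h3 : (x % a + a * (x / (a * b))) % a = x % a := by
    rw [Nat.add_mul_mod_self_left, Nat.mod_mod_of_dvd _ dvd_rfl]
  have h4 : (x % a + a * (x / (a * b))) / a = x / (a * b) := by
    rw [Nat.add_mul_div_left _ _ ha, Nat.div_eq_of_lt (Nat.mod_lt _ ha), zero_add]
  simp only [phi_cons]
  rw [h1, h2, h3, h4, Nat.div_div_eq_div_mul]
  ring

lemma sw_lt {a b n x : ℕ} (ha : 0 < a) (hb : 0 < b) (hx : x < b * a * n) :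
    sw a b x < a * b * n := by
  have hc : x / b % a < a := Nat.mod_lt _ ha
  have hd : x % b < b := Nat.mod_lt _ hb
  have he : x / (b * a) < n := by
    rw [Nat.div_lt_iff_lt_mul (Nat.mul_pos hb ha)]
    calc x < b * a * n := hx
      _ = n * (b * a) := by ring
  exact triple_lt hc hd he

lemma perm_equiv {L L' : FlatLayout} (h : L.Perm L') : Valid L →
    ∃ σ τ : ℕ → ℕ,
      (∀ x, phi L' x = phi L (σ x)) ∧ (∀ y, phi L y = phi L' (τ y)) ∧
      (∀ x, x < size L' → σ x < size L) ∧ (∀ y, y < size L → τ y < size L') ∧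
      (∀ x, x < size L' → τ (σ x) = x) ∧ (∀ y, y < size L → σ (τ y) = y) := by
  induction h with
  | nil =>
      exact fun _ => ⟨id, id, fun _ => rfl, fun _ => rfl, fun _ h => h, fun _ h => h,
        fun _ _ => rfl, fun _ _ => rfl⟩
  | @cons p l l' hperm ih =>
      intro hv
      have hvt : Valid l := fun q hq => hv q (List.mem_cons_of_mem _ hq)
      have hp : 0 < p.1 := hv p (List.mem_cons_self)
      obtain ⟨σ, τ, h1, h2, h3, h4, h5, h6⟩ := ih hvt
      set a := p.1 with hadef
      have key : ∀ (g : ℕ → ℕ) (x : ℕ),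
          (x % a + a * g (x / a)) % a = x % a ∧ (x % a + a * g (x / a)) / a = g (x / a) :=
        fun g x => ⟨by rw [Nat.add_mul_mod_self_left, Nat.mod_mod_of_dvd _ dvd_rfl],
          by rw [Nat.add_mul_div_left _ _ hp, Nat.div_eq_of_lt (Nat.mod_lt _ hp), zero_add]⟩
      refine ⟨fun x => x % a + a * σ (x / a), fun y => y % a + a * τ (y / a),
        ?_, ?_, ?_, ?_, ?_, ?_⟩
      · intro x
        rw [phi_cons, phi_cons, (key σ x).1, (key σ x).2, h1]
      · intro y
        rw [phi_cons, phi_cons, (key τ y).1, (key τ y).2, h2]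
      · intro x hx
        rw [size_cons] at hx ⊢
        have hd : x / a < size l' := by
          rw [Nat.div_lt_iff_lt_mul hp]; calc x < a * size l' := hx
            _ = size l' * a := by ring
        exact pair_lt (Nat.mod_lt _ hp) (h3 _ hd)
      · intro y hy
        rw [size_cons] at hy ⊢
        have hd : y / a < size l := by
          rw [Nat.div_lt_iff_lt_mul hp]; calc y < a * size l := hy
            _ = size l * a := by ring
        exact pair_lt (Nat.mod_lt _ hp) (h4 _ hd)
      · intro x hx
        rw [size_cons] at hx
        have hd : x / a < size l' := by
          rw [Nat.div_lt_iff_lt_mul hp]; calc x < a * size l' := hx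
            _ = size l' * a := by ring
        show (x % a + a * σ (x / a)) % a + a * τ ((x % a + a * σ (x / a)) / a) = x
        rw [(key σ x).1, (key σ x).2, h5 _ hd, Nat.mod_add_div]
      · intro y hy
        rw [size_cons] at hy
        have hd : y / a < size l := by
          rw [Nat.div_lt_iff_lt_mul hp]; calc y < a * size l := hy
            _ = size l * a := by ring
        show (y % a + a * τ (y / a)) % a + a * σ ((y % a + a * τ (y / a)) / a) = y
        rw [(key τ y).1, (key τ y).2, h6 _ hd, Nat.mod_add_div]
  | swap p q l =>
      intro hv
      obtain ⟨b, db⟩ := p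
      obtain ⟨a, da⟩ := q
      have ha : 0 < a := hv (a, da) (List.mem_cons_self)
      have hb : 0 < b := hv (b, db) (List.mem_cons_of_mem _ (List.mem_cons_self))
      refine ⟨fun x => sw a b x, fun y => sw b a y, ?_, ?_, ?_, ?_, ?_, ?_⟩
      · intro x
        exact (phi_swap hb ha db da l x).symm
      · intro y
        exact (phi_swap ha hb da db l y).symm
      · intro x hx
        simp only [size_cons] at hx ⊢
        have : x < b * a * size l := by rw [← mul_assoc] at hx; exact hx
        have := sw_lt ha hb this
        rw [← mul_assoc]; exact this
      · intro y hy
        simp only [size_cons] at hy ⊢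
        have : y < a * b * size l := by rw [← mul_assoc] at hy; exact hy
        have := sw_lt hb ha this
        rw [← mul_assoc]; exact this
      · exact fun x _ => sw_sw ha hb x
      · exact fun y _ => sw_sw hb ha y
  | @trans l₁ l₂ l₃ h₁ h₂ ih₁ ih₂ =>
      intro hv
      have hv₂ : Valid l₂ := fun q hq => hv q (h₁.mem_iff.mpr hq)
      obtain ⟨σ₁, τ₁, a1, a2, a3, a4, a5, a6⟩ := ih₁ hv
      obtain ⟨σ₂, τ₂, b1, b2, b3, b4, b5, b6⟩ := ih₂ hv₂
      refine ⟨σ₁ ∘ σ₂, τ₂ ∘ τ₁, ?_, ?_, ?_, ?_, ?_, ?_⟩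
      · intro x; rw [b1, a1]; rfl
      · intro y; rw [a2, b2]; rfl
      · exact fun x hx => a3 _ (b3 _ hx)
      · exact fun y hy => b4 _ (a4 _ hy)
      · intro x hx
        show τ₂ (τ₁ (σ₁ (σ₂ x))) = x
        rw [a5 _ (b3 _ hx), b5 _ hx]
      · intro y hy
        show σ₁ (σ₂ (τ₂ (τ₁ y))) = y
        rw [b6 _ (a4 _ hy), a6 _ hy]

lemma valid_perm {L L' : FlatLayout} (h : L.Perm L') (hv : Valid L) : Valid L' :=
  fun p hp => hv p (h.mem_iff.mpr hp)

lemma compact_of_perm {L L' : FlatLayout} (h : L.Perm L') (hv : Valid L)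
    (hc : Compact L) : Compact L' := by
  have hsz : size L = size L' := (h.map Prod.fst).prod_eq
  have hcz : cosize L = cosize L' := by
    unfold cosize
    rw [(h.map fun p => (p.1 - 1) * p.2).sum_eq]
  obtain ⟨σ, τ, h1, h2, h3, h4, h5, h6⟩ := perm_equiv h hv
  have hσ : Set.BijOn σ {x | x < size L'} {x | x < size L} :=
    Set.InvOn.bijOn ⟨fun x hx => h5 x hx, fun y hy => h6 y hy⟩
      (fun x hx => h3 x hx) (fun y hy => h4 y hy)
  have := (hc.comp hσ).congr (fun x _ => (h1 x).symm)
  rwa [hcz] at this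

lemma compact_perm_iff {L L' : FlatLayout} (h : L.Perm L') (hv : Valid L) :
    Compact L ↔ Compact L' :=
  ⟨compact_of_perm h hv, compact_of_perm h.symm (valid_perm h hv)⟩

lemma valid_append {A B : FlatLayout} (hA : Valid A) (hB : Valid B) : Valid (A ++ B) :=
  fun p hp => (List.mem_append.1 hp).elim (hA p) (hB p)

end FlatLayout


open FlatLayout in
theorem perp_tfae (A B : FlatLayout) (hA : A.Valid) (hB : B.Valid) :
    [Perp A B, Perp B A, Perp A (squeeze B), Perp A (coal B), Perp A (sortL B)].TFAE := by
  have hsq : Valid (squeeze B) := valid_squeeze hB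
  obtain ⟨hcs, hcc, hcp⟩ := coalAux_spec hsq
  tfae_have 1 ↔ 2 := compact_perm_iff List.perm_append_comm (valid_append hA hB)
  tfae_have 1 ↔ 3 := by
    refine compact_congr ?_ ?_ fun x => ?_
    · rw [size_append, size_append, size_squeeze]
    · have h1 := cosize_append A B
      have h2 := cosize_append A (squeeze B)
      have h3 := cosize_squeeze B
      omega
    · rw [phi_append, phi_append, phi_squeeze]
  tfae_have 1 ↔ 4 := by
    refine compact_congr ?_ ?_ fun x => ?_
    · rw [size_append, size_append]
      unfold coal
      rw [hcs, size_squeeze]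
    · have h1 := cosize_append A B
      have h2 := cosize_append A (coal B)
      have h3 : cosize (coal B) = cosize B := by
        unfold coal; rw [hcc, cosize_squeeze]
      omega
    · rw [phi_append, phi_append]
      unfold coal
      rw [hcp, phi_squeeze]
  tfae_have 1 ↔ 5 :=
    compact_perm_iff ((List.Perm.refl A).append (List.mergeSort_perm B _).symm)
      (valid_append hA hB)
  tfae_finish
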